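/- Let K be an infinite field, let n ≥ 1, and let f = ∑_{σ ∈ S_m} α_σ x_{σ(1)}⋯x_{σ(m)} be a multilinear polynomial of degree m. If there exist admissible data (T, t) with k = n such that β^{(n,T,t)} ≠ 0, then f is not a polynomial identity of UT_{n+1}(K). -/

import Mathlib

/-- Evaluation of the multilinear polynomial `∑ σ, α σ • x_{σ(1)} ⋯ x_{σ(m)}`
at the tuple `a` of elements of the `K`-algebra `A`. -/
noncomputable def mEval {K A : Type*} [Field K] [Ring A] [Algebra K A]
    {m : ℕ} (α : Equiv.Perm (Fin m) → K) (a : Fin m → A) : A :=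
  ∑ σ : Equiv.Perm (Fin m), α σ • (List.ofFn fun i => a (σ i)).prod

/-- `M` is an upper triangular matrix, i.e. an element of `UT_n(K)`. -/
def IsUT {K : Type*} [Field K] {n : ℕ} (M : Matrix (Fin n) (Fin n) K) : Prop :=
  ∀ i j : Fin n, (j : ℕ) < (i : ℕ) → M i j = 0

/-- Admissible data `(T, t)`: the indices `t 0 < t 1 < ⋯ < t (k-1)` are strictly increasing,
the sets `T i` are pairwise disjoint, and no `T i` contains any `t j`. -/
def Admissible {m k : ℕ} (T : Fin k → Finset (Fin m)) (t : Fin k → Fin m) : Prop :=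
  StrictMono t ∧ (∀ i j : Fin k, i ≠ j → Disjoint (T i) (T j)) ∧
    ∀ i j : Fin k, t j ∉ T i

/-- The starting position (0-based) of the `i`-th block, namely
`h_1 + ⋯ + h_{i-1}` where `h_l = |T_l| + 1`. -/
def blockStart {m k : ℕ} (T : Fin k → Finset (Fin m)) (i : Fin k) : ℕ :=
  ∑ l ∈ Finset.univ.filter (fun l => l < i), ((T l).card + 1)

/-- `σ ∈ S(k, T, t)`: for each `i`, `σ` maps the positions of the `i`-th block onto `T i`,
and the position immediately after the `i`-th block to `t i`. -/
def InSPerm {m k : ℕ} (T : Fin k → Finset (Fin m)) (t : Fin k → Fin m)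
    (σ : Equiv.Perm (Fin m)) : Prop :=
  ∀ i : Fin k,
    ((Finset.univ.filter fun p : Fin m =>
        blockStart T i ≤ (p : ℕ) ∧ (p : ℕ) < blockStart T i + (T i).card).image σ = T i) ∧
      ∀ p : Fin m, (p : ℕ) = blockStart T i + (T i).card → σ p = t i

namespace MLProof
open Matrix MvPolynomial

variable {K : Type*} [Field K] {m n : ℕ}

theorem stdb_mul {R : Type*} [CommRing R] {N : ℕ} (a b r s : Fin N) (M : Matrix (Fin N) (Fin N) R) :
    (Matrix.single a b (1:R) * M) r s = if r = a then M b s else 0 := by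
  rcases eq_or_ne r a with h | h
  · subst h; simp
  · simp [h]

variable (K) in
/-- The substitution matrices over the polynomial ring. -/
noncomputable def Amat (t : Fin n → Fin m) (j : Fin m) :
    Matrix (Fin (n+1)) (Fin (n+1)) (MvPolynomial (Fin m × Fin (n+1)) K) :=
  if hj : ∃ i, t i = j then
    Matrix.single (hj.choose).castSucc (hj.choose).succ 1
  else Matrix.diagonal fun r => MvPolynomial.X (j, r)

def okRun (t : Fin n → Fin m) : Fin (n+1) → List (Fin m) → Prop
  | _, [] => True
  | r, j :: js =>
    if hj : ∃ i, t i = j then r = (hj.choose).castSucc ∧ okRun t (hj.choose).succ js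
    else okRun t r js

noncomputable def rowAfter (t : Fin n → Fin m) : Fin (n+1) → List (Fin m) → Fin (n+1)
  | r, [] => r
  | r, j :: js =>
    if hj : ∃ i, t i = j then rowAfter t (hj.choose).succ js else rowAfter t r js

noncomputable def muF (t : Fin n → Fin m) : Fin (n+1) → List (Fin m) → ((Fin m × Fin (n+1)) →₀ ℕ)
  | _, [] => 0
  | r, j :: js =>
    if hj : ∃ i, t i = j then muF t (hj.choose).succ js
    else Finsupp.single (j, r) 1 + muF t r js

section simps
variable (t : Fin n → Fin m)

theorem exists_choose_eq (ht : Function.Injective t) {j : Fin m} {i : Fin n} (hj : ∃ i', t i' = j) (h : t i = j) :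
    hj.choose = i := ht (hj.choose_spec.trans h.symm)

theorem okRun_nil (r : Fin (n+1)) : okRun t r [] = True := rfl
theorem rowAfter_nil (r : Fin (n+1)) : rowAfter t r [] = r := rfl
theorem muF_nil (r : Fin (n+1)) : muF t r [] = 0 := rfl

theorem okRun_cons_t (ht : Function.Injective t) {i : Fin n} {j : Fin m} (h : t i = j) (r : Fin (n+1)) (js : List (Fin m)) :
    okRun t r (j :: js) = (r = i.castSucc ∧ okRun t i.succ js) := by
  have hj : ∃ i', t i' = j := ⟨i, h⟩
  simp only [okRun, dif_pos hj, exists_choose_eq t ht hj h]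

theorem okRun_cons_nt {j : Fin m} (h : ¬ ∃ i, t i = j) (r : Fin (n+1)) (js : List (Fin m)) :
    okRun t r (j :: js) = okRun t r js := by
  simp only [okRun, dif_neg h]

theorem rowAfter_cons_t (ht : Function.Injective t) {i : Fin n} {j : Fin m} (h : t i = j) (r : Fin (n+1)) (js : List (Fin m)) :
    rowAfter t r (j :: js) = rowAfter t i.succ js := by
  have hj : ∃ i', t i' = j := ⟨i, h⟩
  simp only [rowAfter, dif_pos hj, exists_choose_eq t ht hj h]

theorem rowAfter_cons_nt {j : Fin m} (h : ¬ ∃ i, t i = j) (r : Fin (n+1)) (js : List (Fin m)) :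
    rowAfter t r (j :: js) = rowAfter t r js := by
  simp only [rowAfter, dif_neg h]

theorem muF_cons_t (ht : Function.Injective t) {i : Fin n} {j : Fin m} (h : t i = j) (r : Fin (n+1)) (js : List (Fin m)) :
    muF t r (j :: js) = (muF t i.succ js : (Fin m × Fin (n+1)) →₀ ℕ) := by
  have hj : ∃ i', t i' = j := ⟨i, h⟩
  simp only [muF, dif_pos hj, exists_choose_eq t ht hj h]

theorem muF_cons_nt {j : Fin m} (h : ¬ ∃ i, t i = j) (r : Fin (n+1)) (js : List (Fin m)) :
    muF t r (j :: js) = Finsupp.single (j, r) 1 + muF t r js := by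
  simp only [muF, dif_neg h]

open Classical in
theorem entry_eq (ht : Function.Injective t) (r s : Fin (n+1)) (js : List (Fin m)) :
    ((js.map (Amat K t)).prod) r s =
      if okRun t r js ∧ rowAfter t r js = s then
        MvPolynomial.monomial (muF t r js) (1:K) else 0 := by
  induction js generalizing r with
  | nil =>
    simp only [List.map_nil, List.prod_nil, okRun_nil, rowAfter_nil, muF_nil, true_and,
      Matrix.one_apply]
    split <;> simp [*]
  | cons j js ih =>
    simp only [List.map_cons, List.prod_cons]
    by_cases hj : ∃ i, t i = j
    · obtain ⟨i, hi⟩ := hj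
      rw [Amat, dif_pos ⟨i, hi⟩, exists_choose_eq t ht ⟨i, hi⟩ hi, stdb_mul, ih i.succ,
        okRun_cons_t t ht hi, rowAfter_cons_t t ht hi, muF_cons_t t ht hi]
      by_cases hr : r = i.castSucc <;> simp [hr, and_assoc]
    · rw [Amat, dif_neg hj, Matrix.diagonal_mul, ih r,
        okRun_cons_nt t hj, rowAfter_cons_nt t hj, muF_cons_nt t hj]
      split
      · rw [X, monomial_mul, one_mul]
      · rw [mul_zero]


theorem okRun_append (u w : List (Fin m)) : ∀ r,
    okRun t r (u ++ w) ↔ okRun t r u ∧ okRun t (rowAfter t r u) w := by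
  induction u with
  | nil => intro r; simp [okRun_nil, rowAfter_nil]
  | cons j u ih =>
    intro r
    by_cases hj : ∃ i, t i = j
    · simp only [List.cons_append, okRun, rowAfter, dif_pos hj, ih, and_assoc, List.append_eq]
    · simp only [List.cons_append, okRun, rowAfter, dif_neg hj, ih, List.append_eq]

theorem rowAfter_append (u w : List (Fin m)) : ∀ r,
    rowAfter t r (u ++ w) = rowAfter t (rowAfter t r u) w := by
  induction u with
  | nil => intro r; simp [rowAfter_nil]
  | cons j u ih =>
    intro r
    by_cases hj : ∃ i, t i = j
    · simp only [List.cons_append, rowAfter, dif_pos hj, ih, List.append_eq]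
    · simp only [List.cons_append, rowAfter, dif_neg hj, ih, List.append_eq]

theorem muF_append (u w : List (Fin m)) : ∀ r,
    muF t r (u ++ w) = muF t r u + muF t (rowAfter t r u) w := by
  induction u with
  | nil => intro r; simp [muF_nil, rowAfter_nil]
  | cons j u ih =>
    intro r
    by_cases hj : ∃ i, t i = j
    · simp only [List.cons_append, muF, rowAfter, dif_pos hj, ih, List.append_eq]
    · simp only [List.cons_append, muF, rowAfter, dif_neg hj, ih, add_assoc, List.append_eq]

/-- number of `t`-positions (w.r.t. `σ`) among positions `< p`. -/
noncomputable def rowNat (t : Fin n → Fin m) (σ : Equiv.Perm (Fin m)) (p : ℕ) : ℕ :=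
  (Finset.univ.filter fun i : Fin n => ((σ.symm (t i) : ℕ) < p)).card

theorem rowNat_zero (σ : Equiv.Perm (Fin m)) : rowNat t σ 0 = 0 := by
  simp [rowNat]

theorem rowNat_le (σ : Equiv.Perm (Fin m)) (p : ℕ) : rowNat t σ p ≤ n := by
  simpa [rowNat] using Finset.card_filter_le Finset.univ (fun i : Fin n => ((σ.symm (t i) : ℕ) < p))

theorem rowNat_succ_t (ht : Function.Injective t) (σ : Equiv.Perm (Fin m)) {p : Fin m}
    {i : Fin n} (hi : t i = σ p) : rowNat t σ (p + 1) = rowNat t σ p + 1 := by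
  have hqi : σ.symm (t i) = p := by rw [hi]; exact σ.symm_apply_apply p
  have hset : (Finset.univ.filter fun i' : Fin n => ((σ.symm (t i') : ℕ) < (p:ℕ) + 1)) =
      insert i (Finset.univ.filter fun i' : Fin n => ((σ.symm (t i') : ℕ) < (p:ℕ))) := by
    ext i'
    simp only [Finset.mem_filter, Finset.mem_univ, true_and, Finset.mem_insert]
    constructor
    · intro hlt
      rcases Nat.lt_succ_iff_lt_or_eq.mp hlt with h | h
      · exact Or.inr h
      · left
        have : σ.symm (t i') = p := Fin.ext h
        have : t i' = σ p := by
          have := congrArg σ this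
          rwa [σ.apply_symm_apply] at this
        exact ht (this.trans hi.symm)
    · rintro (rfl | h)
      · rw [hqi]; exact Nat.lt_succ_self _
      · exact h.trans (Nat.lt_succ_self _)
  rw [rowNat, hset, Finset.card_insert_of_notMem, rowNat]
  simp [hqi]

theorem rowNat_succ_nt (σ : Equiv.Perm (Fin m)) {p : Fin m}
    (h : ¬∃ i, t i = σ p) : rowNat t σ ((p:ℕ) + 1) = rowNat t σ p := by
  unfold rowNat
  congr 1
  ext i'
  simp only [Finset.mem_filter, Finset.mem_univ, true_and]
  constructor
  · intro hlt
    rcases Nat.lt_succ_iff_lt_or_eq.mp hlt with h' | h'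
    · exact h'
    · exact absurd ⟨i', by
        have : σ.symm (t i') = p := Fin.ext h'
        have := congrArg σ this
        rwa [σ.apply_symm_apply] at this⟩ h
  · exact fun h' => h'.trans (Nat.lt_succ_self _)

theorem take_succ_ofFn (σ : Equiv.Perm (Fin m)) (p : Fin m) :
    (List.ofFn ⇑σ).take ((p:ℕ) + 1) = (List.ofFn ⇑σ).take p ++ [σ p] := by
  rw [List.take_succ]
  congr 1
  rw [List.getElem?_eq_getElem (by simpa using p.isLt)]
  simp [List.getElem_ofFn]

theorem drop_eq_cons_ofFn (σ : Equiv.Perm (Fin m)) (p : Fin m) :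
    (List.ofFn ⇑σ).drop p = σ p :: (List.ofFn ⇑σ).drop ((p:ℕ) + 1) := by
  rw [List.drop_eq_getElem_cons (by simpa using p.isLt)]
  simp [List.getElem_ofFn]

theorem rowAfter_take (ht : Function.Injective t) (σ : Equiv.Perm (Fin m)) :
    ∀ p ≤ m, okRun t 0 ((List.ofFn ⇑σ).take p) →
      ((rowAfter t 0 ((List.ofFn ⇑σ).take p) : Fin (n+1)) : ℕ) = rowNat t σ p := by
  intro p
  induction p with
  | zero => intro _ _; simp [rowAfter_nil, rowNat_zero]
  | succ p ih =>
    intro hp hok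
    have hpm : p < m := hp
    have hfin : ((⟨p, hpm⟩ : Fin m) : ℕ) = p := rfl
    rw [← hfin, take_succ_ofFn] at hok ⊢
    rw [rowAfter_append]
    rw [okRun_append] at hok
    obtain ⟨hok1, hok2⟩ := hok
    have ihv := ih (le_of_lt hpm) hok1
    by_cases hj : ∃ i, t i = σ ⟨p, hpm⟩
    · obtain ⟨i, hi⟩ := hj
      rw [rowAfter_cons_t t ht hi, rowAfter_nil]
      rw [okRun_cons_t t ht hi] at hok2
      have hr : rowAfter t 0 ((List.ofFn ⇑σ).take p) = i.castSucc := hok2.1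
      rw [rowNat_succ_t t ht σ hi, hfin, ← ihv, hr]
      simp
    · rw [rowAfter_cons_nt t hj, rowAfter_nil, rowNat_succ_nt t σ hj, hfin, ihv]

theorem okRun_t_pos (ht : Function.Injective t) (σ : Equiv.Perm (Fin m))
    (hok : okRun t 0 (List.ofFn ⇑σ)) (i : Fin n) :
    rowNat t σ ((σ.symm (t i) : Fin m) : ℕ) = (i : ℕ) := by
  set q : Fin m := σ.symm (t i) with hq
  have hti : t i = σ q := (σ.apply_symm_apply (t i)).symm
  have hsplit : List.ofFn ⇑σ = (List.ofFn ⇑σ).take q ++ ((List.ofFn ⇑σ).drop q) :=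
    (List.take_append_drop _ _).symm
  rw [hsplit, okRun_append] at hok
  obtain ⟨hok1, hok2⟩ := hok
  rw [drop_eq_cons_ofFn, okRun_cons_t t ht hti] at hok2
  have := rowAfter_take t ht σ q (le_of_lt q.isLt) hok1
  rw [hok2.1] at this
  simpa using this.symm

theorem muF_nt_pos (ht : Function.Injective t) (σ : Equiv.Perm (Fin m))
    {j : Fin m} (hj : ¬∃ i, t i = j) :
    muF t 0 (List.ofFn ⇑σ)
      (j, rowAfter t 0 ((List.ofFn ⇑σ).take ((σ.symm j : Fin m) : ℕ))) ≠ 0 := by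
  set q : Fin m := σ.symm j with hq
  have hjq : σ q = j := σ.apply_symm_apply j
  have hsplit : List.ofFn ⇑σ = (List.ofFn ⇑σ).take q ++ ((List.ofFn ⇑σ).drop q) :=
    (List.take_append_drop _ _).symm
  rw [show muF t 0 (List.ofFn ⇑σ) = muF t 0 ((List.ofFn ⇑σ).take q ++ ((List.ofFn ⇑σ).drop q))
      from by rw [← hsplit], muF_append, drop_eq_cons_ofFn, hjq,
    muF_cons_nt t hj]
  simp [Finsupp.single_apply]

section blocks
variable (T : Fin n → Finset (Fin m))

/-- `NbS T v = ∑_{l < v} (|T l| + 1)` as a function of a natural number `v`. -/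
def NbS (v : ℕ) : ℕ :=
  ∑ l ∈ Finset.univ.filter (fun l : Fin n => (l : ℕ) < v), ((T l).card + 1)

theorem blockStart_eq (i : Fin n) : blockStart T i = NbS T (i : ℕ) := by
  unfold blockStart NbS
  refine Finset.sum_congr ?_ (fun _ _ => rfl)
  ext l
  simp only [Finset.mem_filter, Finset.mem_univ, true_and, Fin.lt_def]

theorem NbS_zero : NbS T 0 = 0 := by simp [NbS]

theorem NbS_succ {v : ℕ} (hv : v < n) :
    NbS T (v + 1) = NbS T v + ((T ⟨v, hv⟩).card + 1) := by
  unfold NbS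
  rw [show (Finset.univ.filter fun l : Fin n => (l : ℕ) < v + 1) =
      insert ⟨v, hv⟩ (Finset.univ.filter fun l : Fin n => (l : ℕ) < v) from ?_,
    Finset.sum_insert (by simp)]
  · ring
  · ext l
    simp only [Finset.mem_filter, Finset.mem_univ, true_and, Finset.mem_insert]
    constructor
    · intro hlt
      rcases Nat.lt_succ_iff_lt_or_eq.mp hlt with h | h
      · exact Or.inr h
      · exact Or.inl (Fin.ext h)
    · rintro (rfl | h)
      · exact Nat.lt_succ_self _
      · exact h.trans (Nat.lt_succ_self _)

theorem NbS_mono : Monotone (NbS T) := by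
  intro a b hab
  apply Finset.sum_le_sum_of_subset
  intro l hl
  simp only [Finset.mem_filter, Finset.mem_univ, true_and] at hl ⊢
  exact lt_of_lt_of_le hl hab

theorem NbS_top : NbS T n = ∑ l : Fin n, ((T l).card + 1) := by
  unfold NbS
  congr 1
  ext l
  simp [l.isLt]

theorem NbS_le_m (t : Fin n → Fin m) (ht : Function.Injective t)
    (hdisj : ∀ i j : Fin n, i ≠ j → Disjoint (T i) (T j))
    (hnotin : ∀ i j : Fin n, t j ∉ T i) : NbS T n ≤ m := by
  classical
  have hU : ((Finset.univ : Finset (Fin n)).biUnion T).card = ∑ l : Fin n, (T l).card :=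
    Finset.card_biUnion (fun i _ j _ hij => hdisj i j hij)
  have hV : (Finset.univ.image t).card = n := by
    rw [Finset.card_image_of_injective _ ht, Finset.card_univ, Fintype.card_fin]
  have hdisjUV : Disjoint ((Finset.univ : Finset (Fin n)).biUnion T) (Finset.univ.image t) := by
    rw [Finset.disjoint_right]
    intro x hx hx'
    simp only [Finset.mem_image, Finset.mem_univ, true_and] at hx
    obtain ⟨j, rfl⟩ := hx
    rw [Finset.mem_biUnion] at hx'
    obtain ⟨i, _, hmem⟩ := hx'
    exact hnotin i j hmem
  have := Finset.card_le_univ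
    (((Finset.univ : Finset (Fin n)).biUnion T) ∪ (Finset.univ.image t))
  rw [Finset.card_union_of_disjoint hdisjUV, hU, hV] at this
  have h3 : Fintype.card (Fin m) = m := Fintype.card_fin m
  have h2 : NbS T n = ∑ l : Fin n, (T l).card + n := by
    rw [NbS_top, Finset.sum_add_distrib]
    simp
  omega

theorem NbS_cover {p : ℕ} :
    ∀ v ≤ n, p < NbS T v →
      ∃ i : Fin n, (i : ℕ) < v ∧ NbS T (i : ℕ) ≤ p ∧ p ≤ NbS T (i : ℕ) + (T i).card := by
  intro v
  induction v with
  | zero => intro _ h; rw [NbS_zero] at h; omega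
  | succ v ih =>
    intro hv h
    by_cases h' : p < NbS T v
    · obtain ⟨i, hi1, hi2, hi3⟩ := ih (by omega) h'
      exact ⟨i, by omega, hi2, hi3⟩
    · have hvn : v < n := by omega
      have hs := NbS_succ T hvn
      refine ⟨⟨v, hvn⟩, ?_, ?_, ?_⟩
      · simpa using Nat.lt_succ_self v
      · simp only [Fin.val_mk]; omega
      · simp only [Fin.val_mk]; omega

/-- The level of a variable: the (0-based) block it belongs to, or `n` for extras. -/
noncomputable def lvlF (j : Fin m) : Fin (n + 1) :=
  if h : ∃ i, j ∈ T i then (h.choose).castSucc else Fin.last n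

theorem lvlF_mem (hdisj : ∀ i j : Fin n, i ≠ j → Disjoint (T i) (T j))
    {j : Fin m} {i : Fin n} (hij : j ∈ T i) : lvlF T j = i.castSucc := by
  have h : ∃ i', j ∈ T i' := ⟨i, hij⟩
  rw [lvlF, dif_pos h]
  congr 1
  by_contra hne
  exact (Finset.disjoint_left.mp (hdisj _ _ hne) h.choose_spec) hij

theorem lvlF_nmem {j : Fin m} (h : ∀ i, j ∉ T i) : lvlF T j = Fin.last n := by
  rw [lvlF, dif_neg (by push_neg; exact h)]

end blocks

section mpart
variable (T : Fin n → Finset (Fin m)) (t : Fin n → Fin m) (σ : Equiv.Perm (Fin m))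

/-- `m₀`, the target monomial exponent. -/
noncomputable def m0 : (Fin m × Fin (n + 1)) →₀ ℕ :=
  ∑ j ∈ Finset.univ.filter (fun j : Fin m => ¬∃ i, t i = j),
    Finsupp.single (j, lvlF T j) 1

/-- Partial target monomial: only variables at positions `≥ p`. -/
noncomputable def mPart (p : ℕ) : (Fin m × Fin (n + 1)) →₀ ℕ :=
  ∑ j ∈ Finset.univ.filter
      (fun j : Fin m => (¬∃ i, t i = j) ∧ p ≤ ((σ.symm j : Fin m) : ℕ)),
    Finsupp.single (j, lvlF T j) 1

theorem mPart_zero : mPart T t σ 0 = m0 T t := by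
  unfold mPart m0
  congr 1
  ext j
  simp

theorem mPart_top : mPart T t σ m = 0 := by
  unfold mPart
  rw [Finset.sum_eq_zero]
  intro j hj
  simp only [Finset.mem_filter, Finset.mem_univ, true_and] at hj
  exact absurd hj.2 (by simpa using (σ.symm j).isLt)

theorem mPart_step_t {p : Fin m} (h : ∃ i, t i = σ p) :
    mPart T t σ (p : ℕ) = mPart T t σ ((p : ℕ) + 1) := by
  unfold mPart
  congr 1
  ext j
  simp only [Finset.mem_filter, Finset.mem_univ, true_and]
  constructor
  · rintro ⟨hj, hle⟩
    refine ⟨hj, ?_⟩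
    rcases Nat.eq_or_lt_of_le hle with heq | hlt
    · exfalso
      apply hj
      have : σ.symm j = p := Fin.ext heq.symm
      obtain ⟨i, hi⟩ := h
      exact ⟨i, by rw [hi, ← this, σ.apply_symm_apply]⟩
    · omega
  · rintro ⟨hj, hle⟩; exact ⟨hj, by omega⟩

theorem mPart_step_nt {p : Fin m} (h : ¬∃ i, t i = σ p) :
    mPart T t σ (p : ℕ) =
      Finsupp.single (σ p, lvlF T (σ p)) 1 + mPart T t σ ((p : ℕ) + 1) := by
  unfold mPart
  have hkey : (Finset.univ.filter
        (fun j : Fin m => (¬∃ i, t i = j) ∧ (p : ℕ) ≤ ((σ.symm j : Fin m) : ℕ))) =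
      insert (σ p) (Finset.univ.filter
        (fun j : Fin m => (¬∃ i, t i = j) ∧ (p : ℕ) + 1 ≤ ((σ.symm j : Fin m) : ℕ))) := by
    ext j
    simp only [Finset.mem_filter, Finset.mem_univ, true_and, Finset.mem_insert]
    constructor
    · rintro ⟨hj, hle⟩
      rcases Nat.eq_or_lt_of_le hle with heq | hlt
      · left
        have hpj : σ.symm j = p := Fin.ext heq.symm
        rw [← hpj]
        exact (σ.apply_symm_apply j).symm
      · exact Or.inr ⟨hj, by omega⟩
    · rintro (rfl | ⟨hj, hle⟩)
      · exact ⟨h, by simp⟩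
      · exact ⟨hj, by omega⟩
  rw [hkey, Finset.sum_insert (by simp)]

end mpart

theorem card_filter_lt_fin {N v : ℕ} (h : v ≤ N) :
    ((Finset.univ : Finset (Fin N)).filter (fun x : Fin N => (x : ℕ) < v)).card = v := by
  have heq : (Finset.univ : Finset (Fin N)).filter (fun x : Fin N => (x : ℕ) < v) =
      Finset.map (Fin.castLEEmb h) Finset.univ := by
    ext x
    simp only [Finset.mem_filter, Finset.mem_univ, true_and, Finset.mem_map]
    constructor
    · intro hx
      exact ⟨⟨(x : ℕ), hx⟩, by apply Fin.ext; simp [Fin.castLEEmb]⟩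
    · rintro ⟨y, rfl⟩
      simpa [Fin.castLEEmb] using y.isLt
  rw [heq, Finset.card_map, Finset.card_univ, Fintype.card_fin]

theorem rowNat_mono (σ : Equiv.Perm (Fin m)) {p p' : ℕ} (h : p ≤ p') :
    rowNat t σ p ≤ rowNat t σ p' := by
  apply Finset.card_le_card
  intro i hi
  simp only [Finset.mem_filter, Finset.mem_univ, true_and] at hi ⊢
  omega

section claims
variable {T : Fin n → Finset (Fin m)} {t : Fin n → Fin m} {σ : Equiv.Perm (Fin m)}

theorem claimA (hmono : StrictMono t)
    (hdisj : ∀ i j : Fin n, i ≠ j → Disjoint (T i) (T j))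
    (hnotin : ∀ i j : Fin n, t j ∉ T i) (hσ : InSPerm T t σ) :
    okRun t 0 (List.ofFn ⇑σ) ∧ rowAfter t 0 (List.ofFn ⇑σ) = Fin.last n ∧
      muF t 0 (List.ofFn ⇑σ) = m0 T t := by
  have ht : Function.Injective t := hmono.injective
  have htot : NbS T n ≤ m := NbS_le_m T t ht hdisj hnotin
  have hNbS_lt : ∀ i : Fin n, NbS T (i : ℕ) + (T i).card < NbS T n := by
    intro i
    calc NbS T (i : ℕ) + (T i).card < NbS T ((i : ℕ) + 1) := by
          rw [NbS_succ T i.isLt]; simp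
      _ ≤ NbS T n := NbS_mono T i.isLt
  have hq : ∀ i : Fin n, ((σ.symm (t i) : Fin m) : ℕ) = NbS T (i : ℕ) + (T i).card := by
    intro i
    have hlt : NbS T (i : ℕ) + (T i).card < m := lt_of_lt_of_le (hNbS_lt i) htot
    have := (hσ i).2 ⟨NbS T (i : ℕ) + (T i).card, hlt⟩ (by rw [blockStart_eq])
    rw [← this, Equiv.symm_apply_apply]
  have hblk : ∀ (p : Fin m) (i : Fin n), NbS T (i : ℕ) ≤ (p : ℕ) →
      (p : ℕ) < NbS T (i : ℕ) + (T i).card → σ p ∈ T i := by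
    intro p i h1 h2
    rw [← (hσ i).1]
    exact Finset.mem_image_of_mem _ (by
      simp only [Finset.mem_filter, Finset.mem_univ, true_and, blockStart_eq]
      exact ⟨h1, h2⟩)
  -- row values
  have R1 : ∀ (i : Fin n) (p : ℕ), NbS T (i : ℕ) ≤ p → p ≤ NbS T (i : ℕ) + (T i).card →
      rowNat t σ p = (i : ℕ) := by
    intro i p h1 h2
    have hset : (Finset.univ.filter fun i' : Fin n => ((σ.symm (t i') : Fin m) : ℕ) < p) =
        (Finset.univ.filter fun i' : Fin n => (i' : ℕ) < (i : ℕ)) := by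
      ext i'
      simp only [Finset.mem_filter, Finset.mem_univ, true_and, hq i']
      constructor
      · intro hlt
        by_contra hge
        push_neg at hge
        have hs1 := NbS_succ T i.isLt
        have hs2 := NbS_succ T i'.isLt
        simp only [Fin.eta] at hs1 hs2
        have hmm : NbS T ((i : ℕ) + 1) ≤ NbS T ((i' : ℕ) + 1) := NbS_mono T (by omega)
        omega
      · intro hlt
        have h3 : NbS T ((i' : ℕ) + 1) ≤ NbS T (i : ℕ) := NbS_mono T hlt
        rw [NbS_succ T i'.isLt] at h3
        simp only [Fin.eta] at h3
        omega
    rw [rowNat, hset, card_filter_lt_fin (le_of_lt i.isLt)]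
  have R2 : ∀ p : ℕ, NbS T n ≤ p → rowNat t σ p = n := by
    intro p hp
    have hset : (Finset.univ.filter fun i' : Fin n => ((σ.symm (t i') : Fin m) : ℕ) < p) =
        Finset.univ := by
      ext i'
      simp only [Finset.mem_filter, Finset.mem_univ, true_and, iff_true, hq i']
      have := hNbS_lt i'
      omega
    rw [rowNat, hset, Finset.card_univ, Fintype.card_fin]
  have hEX : ∀ p : Fin m, NbS T n ≤ (p : ℕ) →
      (¬∃ i, t i = σ p) ∧ ∀ i, σ p ∉ T i := by
    intro p hp
    constructor
    · rintro ⟨i, hi⟩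
      have : σ.symm (t i) = p := by rw [hi, Equiv.symm_apply_apply]
      have h2 := hq i
      rw [this] at h2
      have := hNbS_lt i
      omega
    · intro i hmem
      rw [← (hσ i).1] at hmem
      obtain ⟨p', hp', hpp'⟩ := Finset.mem_image.mp hmem
      have : p' = p := σ.injective hpp'
      subst this
      simp only [Finset.mem_filter, Finset.mem_univ, true_and, blockStart_eq] at hp'
      have := hNbS_lt i
      omega
  have hrowlt : ∀ p : ℕ, rowNat t σ p < n + 1 := fun p => Nat.lt_succ_of_le (rowNat_le t σ p)
  have main : ∀ k, k ≤ m → ∀ r : Fin (n + 1), (r : ℕ) = rowNat t σ (m - k) →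
      okRun t r ((List.ofFn ⇑σ).drop (m - k)) ∧
      rowAfter t r ((List.ofFn ⇑σ).drop (m - k)) = Fin.last n ∧
      muF t r ((List.ofFn ⇑σ).drop (m - k)) = mPart T t σ (m - k) := by
    intro k
    induction k with
    | zero =>
      intro _ r hr
      have hnil : (List.ofFn ⇑σ).drop (m - 0) = [] := by simp
      rw [hnil]
      refine ⟨trivial, ?_, ?_⟩
      · apply Fin.ext
        rw [rowAfter_nil, hr]
        simpa using R2 (m - 0) (by omega)
      · rw [muF_nil, Nat.sub_zero, mPart_top]
    | succ k ih =>
      intro hk r hr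
      have hp : m - (k + 1) < m := by omega
      set p : ℕ := m - (k + 1) with hpdef
      have hpk : m - k = p + 1 := by omega
      set pf : Fin m := ⟨p, hp⟩ with hpf
      have hpfv : (pf : ℕ) = p := rfl
      have hdrop : (List.ofFn ⇑σ).drop p = σ pf :: (List.ofFn ⇑σ).drop (p + 1) :=
        drop_eq_cons_ofFn σ pf
      by_cases hts : ∃ i, t i = σ pf
      · obtain ⟨i, hi⟩ := hts
        have hqi : ((σ.symm (t i) : Fin m) : ℕ) = p := by
          rw [hi, Equiv.symm_apply_apply]
        have hqv : p = NbS T (i : ℕ) + (T i).card := by rw [← hqi, hq i]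
        have hrp : rowNat t σ p = (i : ℕ) := R1 i p (by omega) (by omega)
        have hrp1 : rowNat t σ (p + 1) = (i : ℕ) + 1 := by
          have := rowNat_succ_t t ht σ hi
          simp only [hpf, Fin.val_mk] at this
          rw [this, hrp]
        obtain ⟨ih1, ih2, ih3⟩ := ih (by omega) i.succ (by rw [hpk, hrp1]; simp)
        rw [hpk] at ih1 ih2 ih3
        have hfin0 : r = i.castSucc := by
          apply Fin.ext
          rw [hr]
          simpa using hrp
        refine ⟨?_, ?_, ?_⟩
        · rw [hdrop, okRun_cons_t t ht hi]
          exact ⟨hfin0, ih1⟩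
        · rw [hdrop, rowAfter_cons_t t ht hi, ih2]
        · rw [hdrop, muF_cons_t t ht hi, ih3]
          have := mPart_step_t T t σ (p := pf) ⟨i, hi⟩
          simp only [hpf, Fin.val_mk] at this
          rw [this]
      · have hr01 : rowNat t σ (p + 1) = rowNat t σ p := by
          have := rowNat_succ_nt t σ (p := pf) hts
          simpa [hpf] using this
        obtain ⟨ih1, ih2, ih3⟩ := ih (by omega) r (by rw [hpk, hr01, hr])
        rw [hpk] at ih1 ih2 ih3
        have hlvl : (lvlF T (σ pf) : ℕ) = rowNat t σ p := by
          by_cases hcov : p < NbS T n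
          · obtain ⟨i, hi1, hi2, hi3⟩ := NbS_cover T n le_rfl hcov
            have hne : p ≠ NbS T (i : ℕ) + (T i).card := by
              intro heq
              apply hts
              refine ⟨i, ?_⟩
              have : σ.symm (t i) = pf := by
                apply Fin.ext
                rw [hq i, hpf]
                exact heq.symm
              rw [← this, Equiv.apply_symm_apply]
            have hmem : σ pf ∈ T i := hblk pf i (by omega) (by omega)
            rw [lvlF_mem T hdisj hmem, R1 i p hi2 hi3]
            simp
          · push_neg at hcov
            obtain ⟨-, hnm⟩ := hEX pf hcov
            rw [lvlF_nmem T (hnm), R2 p hcov]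
            simp
        refine ⟨?_, ?_, ?_⟩
        · rw [hdrop, okRun_cons_nt t hts]
          exact ih1
        · rw [hdrop, rowAfter_cons_nt t hts, ih2]
        · rw [hdrop, muF_cons_nt t hts, ih3]
          have hstep := mPart_step_nt T t σ (p := pf) hts
          simp only [hpf, Fin.val_mk] at hstep
          rw [hstep]
          have hpair : r = lvlF T (σ pf) := by
            apply Fin.ext
            rw [hr]
            exact hlvl.symm
          rw [hpair]
  obtain ⟨h1, h2, h3⟩ := main m le_rfl 0 (by rw [Nat.sub_self, rowNat_zero]; rfl)
  rw [Nat.sub_self, List.drop_zero] at h1 h2 h3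
  rw [mPart_zero] at h3
  exact ⟨h1, h2, h3⟩


theorem m0_apply_ne {j : Fin m} {c : Fin (n + 1)} (h : m0 T t (j, c) ≠ 0) :
    (¬∃ i, t i = j) ∧ c = lvlF T j := by
  unfold m0 at h
  rw [Finsupp.finset_sum_apply] at h
  obtain ⟨j', hj', hne⟩ := Finset.exists_ne_zero_of_sum_ne_zero h
  rw [Finsupp.single_apply] at hne
  have hkey : ((j', lvlF T j') : Fin m × Fin (n + 1)) = (j, c) := by
    by_contra hcon
    rw [if_neg hcon] at hne
    exact hne rfl
  simp only [Finset.mem_filter, Finset.mem_univ, true_and] at hj'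
  have h1 : j' = j := congrArg Prod.fst hkey
  subst h1
  exact ⟨hj', (congrArg Prod.snd hkey).symm⟩

theorem claimB (hmono : StrictMono t)
    (hdisj : ∀ i j : Fin n, i ≠ j → Disjoint (T i) (T j))
    (hnotin : ∀ i j : Fin n, t j ∉ T i)
    (hok : okRun t 0 (List.ofFn ⇑σ)) (hmu : muF t 0 (List.ofFn ⇑σ) = m0 T t) :
    InSPerm T t σ := by
  have ht : Function.Injective t := hmono.injective
  have B1 : ∀ i : Fin n, rowNat t σ ((σ.symm (t i) : Fin m) : ℕ) = (i : ℕ) :=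
    okRun_t_pos t ht σ hok
  have B2 : ∀ j : Fin m, (¬∃ i, t i = j) →
      (lvlF T j : ℕ) = rowNat t σ ((σ.symm j : Fin m) : ℕ) := by
    intro j hj
    have h1 := muF_nt_pos t ht σ hj
    have hok1 : okRun t 0 ((List.ofFn ⇑σ).take ((σ.symm j : Fin m) : ℕ)) := by
      have h2 := hok
      rw [show List.ofFn ⇑σ = (List.ofFn ⇑σ).take ((σ.symm j : Fin m) : ℕ) ++
          (List.ofFn ⇑σ).drop ((σ.symm j : Fin m) : ℕ) from (List.take_append_drop _ _).symm,
        okRun_append] at h2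
      exact h2.1
    have hrv := rowAfter_take t ht σ _ (le_of_lt (σ.symm j).isLt) hok1
    rw [hmu] at h1
    have h3 := (m0_apply_ne h1).2
    exact (congrArg Fin.val h3).symm.trans hrv
  have hσq : ∀ i : Fin n, σ (σ.symm (t i)) = t i := fun i => σ.apply_symm_apply _
  have hqinj : Function.Injective (fun i : Fin n => σ.symm (t i)) :=
    fun a b hab => ht (σ.symm.injective hab)
  have fwd : ∀ i i' : Fin n, ((σ.symm (t i') : Fin m) : ℕ) < ((σ.symm (t i) : Fin m) : ℕ) →
      (i' : ℕ) < (i : ℕ) := by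
    intro i i' hlt
    have hstep : rowNat t σ (((σ.symm (t i') : Fin m) : ℕ) + 1) =
        rowNat t σ ((σ.symm (t i') : Fin m) : ℕ) + 1 :=
      rowNat_succ_t t ht σ (hσq i').symm
    have hmono2 : rowNat t σ (((σ.symm (t i') : Fin m) : ℕ) + 1) ≤
        rowNat t σ ((σ.symm (t i) : Fin m) : ℕ) := rowNat_mono t σ (by omega)
    rw [hstep, B1, B1] at *
    omega
  have hlt_iff : ∀ i i' : Fin n,
      ((σ.symm (t i') : Fin m) : ℕ) < ((σ.symm (t i) : Fin m) : ℕ) ↔ (i' : ℕ) < (i : ℕ) := by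
    intro i i'
    refine ⟨fwd i i', fun hlt => ?_⟩
    by_contra hge
    push_neg at hge
    rcases Nat.eq_or_lt_of_le hge with heq | hlt2
    · have : σ.symm (t i) = σ.symm (t i') := Fin.ext heq
      have : i = i' := hqinj this
      omega
    · have := fwd i' i hlt2
      omega
  have hpos_iff : ∀ j : Fin m, (¬∃ i, t i = j) → ∀ i : Fin n,
      (((σ.symm j : Fin m) : ℕ) < ((σ.symm (t i) : Fin m) : ℕ) ↔
        rowNat t σ ((σ.symm j : Fin m) : ℕ) ≤ (i : ℕ)) := by
    intro j hj i
    constructor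
    · intro hlt
      have h5 : rowNat t σ ((σ.symm j : Fin m) : ℕ) ≤
          rowNat t σ ((σ.symm (t i) : Fin m) : ℕ) := rowNat_mono t σ (le_of_lt hlt)
      rw [B1 i] at h5
      exact h5
    · intro hle
      by_contra hge
      push_neg at hge
      rcases Nat.eq_or_lt_of_le hge with heq | hlt2
      · apply hj
        refine ⟨i, ?_⟩
        have hpe : σ.symm (t i) = σ.symm j := Fin.ext heq
        have h6 := congrArg σ hpe
        rwa [hσq i, Equiv.apply_symm_apply] at h6
      · have hstep : rowNat t σ (((σ.symm (t i) : Fin m) : ℕ) + 1) =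
            rowNat t σ ((σ.symm (t i) : Fin m) : ℕ) + 1 :=
          rowNat_succ_t t ht σ (hσq i).symm
        have hmono2 : rowNat t σ (((σ.symm (t i) : Fin m) : ℕ) + 1) ≤
            rowNat t σ ((σ.symm j : Fin m) : ℕ) := rowNat_mono t σ (by omega)
        rw [hstep, B1] at hmono2
        omega
  -- the key counting: position of t i
  have hEi : ∀ i : Fin n,
      (Finset.univ.filter fun j : Fin m =>
        (¬∃ i', t i' = j) ∧ (lvlF T j : ℕ) ≤ (i : ℕ)) =
      (Finset.univ.filter fun i' : Fin n => (i' : ℕ) ≤ (i : ℕ)).biUnion T := by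
    intro i
    ext j
    simp only [Finset.mem_filter, Finset.mem_univ, true_and, Finset.mem_biUnion]
    constructor
    · rintro ⟨hj, hle⟩
      by_cases hmem : ∃ i'', j ∈ T i''
      · obtain ⟨i'', hi''⟩ := hmem
        refine ⟨i'', ?_, hi''⟩
        rw [lvlF_mem T hdisj hi''] at hle
        simpa using hle
      · push_neg at hmem
        rw [lvlF_nmem T hmem] at hle
        simp only [Fin.val_last] at hle
        omega
    · rintro ⟨i', hi', hmem⟩
      refine ⟨?_, ?_⟩
      · rintro ⟨i'', rfl⟩
        exact hnotin i' i'' hmem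
      · rw [lvlF_mem T hdisj hmem]
        simpa using hi'
  have hqval : ∀ i : Fin n, ((σ.symm (t i) : Fin m) : ℕ) = NbS T (i : ℕ) + (T i).card := by
    intro i
    set b : ℕ := ((σ.symm (t i) : Fin m) : ℕ) with hb
    have hbm : b ≤ m := le_of_lt (σ.symm (t i)).isLt
    have hcardP : ((Finset.univ : Finset (Fin m)).filter (fun p : Fin m => (p : ℕ) < b)).card
        = b := card_filter_lt_fin hbm
    have hsplit := Finset.card_filter_add_card_filter_not
      (s := (Finset.univ : Finset (Fin m)).filter (fun p : Fin m => (p : ℕ) < b))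
      (p := fun p : Fin m => ∃ i', t i' = σ p)
    have hPt : (((Finset.univ : Finset (Fin m)).filter (fun p : Fin m => (p : ℕ) < b)).filter
        (fun p : Fin m => ∃ i', t i' = σ p)).card = (i : ℕ) := by
      have himg : ((Finset.univ : Finset (Fin m)).filter (fun p : Fin m => (p : ℕ) < b)).filter
          (fun p : Fin m => ∃ i', t i' = σ p) =
          Finset.image (fun i' : Fin n => σ.symm (t i'))
            (Finset.univ.filter fun i' : Fin n => ((σ.symm (t i') : Fin m) : ℕ) < b) := by
        ext p
        simp only [Finset.mem_filter, Finset.mem_univ, true_and, Finset.mem_image]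
        constructor
        · rintro ⟨hpb, i', hi'⟩
          refine ⟨i', ?_, ?_⟩
          · rw [show σ.symm (t i') = p from by rw [hi', Equiv.symm_apply_apply]]
            exact hpb
          · rw [hi', Equiv.symm_apply_apply]
        · rintro ⟨i', hi', rfl⟩
          exact ⟨hi', ⟨i', (hσq i').symm⟩⟩
      rw [himg, Finset.card_image_of_injective _ hqinj]
      have : (Finset.univ.filter fun i' : Fin n => ((σ.symm (t i') : Fin m) : ℕ) < b) =
          (Finset.univ.filter fun i' : Fin n => (i' : ℕ) < (i : ℕ)) := by
        ext i'
        simp only [Finset.mem_filter, Finset.mem_univ, true_and]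
        exact hlt_iff i i'
      rw [this, card_filter_lt_fin (le_of_lt i.isLt)]
    have hPd : (((Finset.univ : Finset (Fin m)).filter (fun p : Fin m => (p : ℕ) < b)).filter
        (fun p : Fin m => ¬∃ i', t i' = σ p)).card = ∑ i' ∈ Finset.univ.filter
          (fun i' : Fin n => (i' : ℕ) ≤ (i : ℕ)), (T i').card := by
      have himg : ((Finset.univ : Finset (Fin m)).filter (fun p : Fin m => (p : ℕ) < b)).filter
          (fun p : Fin m => ¬∃ i', t i' = σ p) =
          Finset.image (fun j : Fin m => σ.symm j)
            (Finset.univ.filter fun j : Fin m =>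
              (¬∃ i', t i' = j) ∧ (lvlF T j : ℕ) ≤ (i : ℕ)) := by
        ext p
        simp only [Finset.mem_filter, Finset.mem_univ, true_and, Finset.mem_image]
        constructor
        · rintro ⟨hpb, hnt⟩
          refine ⟨σ p, ⟨hnt, ?_⟩, σ.symm_apply_apply p⟩
          have hps : σ.symm (σ p) = p := σ.symm_apply_apply p
          have h7 := (hpos_iff (σ p) hnt i).mp
          have h8 := B2 (σ p) hnt
          rw [hps] at h7 h8
          have h9 := h7 hpb
          omega
        · rintro ⟨j, ⟨hjnt, hjlvl⟩, rfl⟩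
          constructor
          · exact (hpos_iff j hjnt i).mpr (by rw [← B2 j hjnt]; exact hjlvl)
          · rw [Equiv.apply_symm_apply]
            exact hjnt
      rw [himg, Finset.card_image_of_injective _ σ.symm.injective, hEi i,
        Finset.card_biUnion]
      intro a _ c _ hac
      exact hdisj a c hac
    have harith : NbS T (i : ℕ) + (T i).card = (i : ℕ) + ∑ i' ∈ Finset.univ.filter
        (fun i' : Fin n => (i' : ℕ) ≤ (i : ℕ)), (T i').card := by
      have h1 : NbS T (i : ℕ) = (∑ i' ∈ Finset.univ.filter
          (fun i' : Fin n => (i' : ℕ) < (i : ℕ)), (T i').card) + (i : ℕ) := by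
        unfold NbS
        rw [Finset.sum_add_distrib]
        congr 1
        rw [Finset.sum_const, smul_eq_mul, mul_one, card_filter_lt_fin (le_of_lt i.isLt)]
      have h2 : (Finset.univ.filter fun i' : Fin n => (i' : ℕ) ≤ (i : ℕ)) =
          insert i (Finset.univ.filter fun i' : Fin n => (i' : ℕ) < (i : ℕ)) := by
        ext i'
        simp only [Finset.mem_filter, Finset.mem_univ, true_and, Finset.mem_insert]
        constructor
        · intro hle
          rcases Nat.eq_or_lt_of_le hle with heq | hlt
          · exact Or.inl (Fin.ext heq)
          · exact Or.inr hlt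
        · rintro (rfl | hlt) <;> omega
      rw [h2, Finset.sum_insert (by simp)]
      omega
    omega
  -- conclude InSPerm
  intro i
  have hblockv : blockStart T i + (T i).card = ((σ.symm (t i) : Fin m) : ℕ) := by
    rw [blockStart_eq, hqval i]
  constructor
  · -- image condition
    have hsub : ∀ p : Fin m, blockStart T i ≤ (p : ℕ) →
        (p : ℕ) < blockStart T i + (T i).card → σ p ∈ T i := by
      intro p hp1 hp2
      rw [blockStart_eq] at hp1 hp2
      have hpq : (p : ℕ) < ((σ.symm (t i) : Fin m) : ℕ) := by
        rw [hqval i]; omega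
      have hnt : ¬∃ i', t i' = σ p := by
        rintro ⟨i', hi'⟩
        have hpq' : σ.symm (t i') = p := by rw [hi', Equiv.symm_apply_apply]
        have hlt : (i' : ℕ) < (i : ℕ) := by
          apply fwd
          rw [hpq']
          exact hpq
        have hv' := hqval i'
        rw [hpq'] at hv'
        have hs := NbS_succ T i'.isLt
        simp only [Fin.eta] at hs
        have hm2 : NbS T ((i' : ℕ) + 1) ≤ NbS T (i : ℕ) := NbS_mono T hlt
        omega
      have hps : σ.symm (σ p) = p := σ.symm_apply_apply p
      have hple : rowNat t σ (p : ℕ) ≤ (i : ℕ) := by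
        have h7 := (hpos_iff (σ p) hnt i).mp
        rw [hps] at h7
        exact h7 hpq
      have hpge : (i : ℕ) ≤ rowNat t σ (p : ℕ) := by
        have hsubs : (Finset.univ.filter fun i' : Fin n => (i' : ℕ) < (i : ℕ)) ⊆
            (Finset.univ.filter fun i' : Fin n =>
              ((σ.symm (t i') : Fin m) : ℕ) < (p : ℕ)) := by
          intro i' hi'
          simp only [Finset.mem_filter, Finset.mem_univ, true_and] at hi' ⊢
          have hv' := hqval i'
          have hs := NbS_succ T i'.isLt
          simp only [Fin.eta] at hs
          have hm2 : NbS T ((i' : ℕ) + 1) ≤ NbS T (i : ℕ) := NbS_mono T hi'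
          omega
        have := Finset.card_le_card hsubs
        rwa [card_filter_lt_fin (le_of_lt i.isLt)] at this
      have hlv : (lvlF T (σ p) : ℕ) = (i : ℕ) := by
        have h8 := B2 (σ p) hnt
        rw [hps] at h8
        omega
      by_cases hmem : ∃ i'', σ p ∈ T i''
      · obtain ⟨i'', hi''⟩ := hmem
        rw [lvlF_mem T hdisj hi''] at hlv
        have : i'' = i := Fin.ext (by simpa using hlv)
        rwa [← this]
      · push_neg at hmem
        rw [lvlF_nmem T hmem] at hlv
        simp only [Fin.val_last] at hlv
        omega
    have hcardF : ((Finset.univ : Finset (Fin m)).filter fun p : Fin m =>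
        blockStart T i ≤ (p : ℕ) ∧ (p : ℕ) < blockStart T i + (T i).card).card
        = (T i).card := by
      have hset : ((Finset.univ : Finset (Fin m)).filter fun p : Fin m =>
          blockStart T i ≤ (p : ℕ) ∧ (p : ℕ) < blockStart T i + (T i).card) =
          ((Finset.univ : Finset (Fin m)).filter fun p : Fin m =>
            (p : ℕ) < blockStart T i + (T i).card) \
          ((Finset.univ : Finset (Fin m)).filter fun p : Fin m =>
            (p : ℕ) < blockStart T i) := by
        ext p
        simp only [Finset.mem_filter, Finset.mem_univ, true_and, Finset.mem_sdiff]
        omega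
      have hb1 : blockStart T i + (T i).card ≤ m := by
        rw [hblockv]
        exact le_of_lt (σ.symm (t i)).isLt
      rw [hset, Finset.card_sdiff_of_subset (by
        intro p hp
        simp only [Finset.mem_filter, Finset.mem_univ, true_and] at hp ⊢
        omega), card_filter_lt_fin hb1, card_filter_lt_fin (by omega)]
      omega
    apply Finset.eq_of_subset_of_card_le
    · intro x hx
      obtain ⟨p, hp, rfl⟩ := Finset.mem_image.mp hx
      simp only [Finset.mem_filter, Finset.mem_univ, true_and] at hp
      exact hsub p hp.1 hp.2
    · rw [Finset.card_image_of_injective _ σ.injective, hcardF]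
  · intro p hp
    have : p = σ.symm (t i) := by
      apply Fin.ext
      rw [hp, hblockv]
    rw [this, Equiv.apply_symm_apply]

end claims
end simps
end MLProof



open scoped Classical in
/-- The coefficient sum `β^{(k,T,t)} = ∑_{σ ∈ S(k,T,t)} α_σ`. -/
noncomputable def mlBeta {K : Type*} [Field K] {m k : ℕ} (α : Equiv.Perm (Fin m) → K)
    (T : Fin k → Finset (Fin m)) (t : Fin k → Fin m) : K :=
  ∑ σ ∈ Finset.univ.filter (InSPerm T t), α σ

/-- If `β^{(n,T,t)} ≠ 0` for some admissible data `(T, t)` with `k = n`, then the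
multilinear polynomial is not a polynomial identity of `UT_{n+1}(K)`. -/
theorem not_identity_of_beta_ne_zero {K : Type*} [Field K] [Infinite K]
    (n m : ℕ) (hn : 1 ≤ n) (hm : 1 ≤ m) (α : Equiv.Perm (Fin m) → K)
    (h : ∃ (T : Fin n → Finset (Fin m)) (t : Fin n → Fin m),
        Admissible T t ∧ mlBeta α T t ≠ 0) :
    ¬ ∀ a : Fin m → Matrix (Fin (n + 1)) (Fin (n + 1)) K,
        (∀ l, IsUT (a l)) → mEval α a = 0 := by
  classical
  intro hall
  obtain ⟨T, t, ⟨hmono, hdisj, hnotin⟩, hβ⟩ := h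
  have ht : Function.Injective t := hmono.injective
  set E : Matrix (Fin (n + 1)) (Fin (n + 1)) (MvPolynomial (Fin m × Fin (n + 1)) K) :=
    mEval α (MLProof.Amat K t) with hE
  have hkey : MvPolynomial.coeff (MLProof.m0 T t) (E 0 (Fin.last n)) = mlBeta α T t := by
    rw [hE]
    unfold mEval mlBeta
    rw [Matrix.sum_apply, MvPolynomial.coeff_sum, Finset.sum_filter]
    apply Finset.sum_congr rfl
    intro σ _
    have hmap : (List.ofFn fun p => MLProof.Amat K t (σ p)) =
        (List.ofFn ⇑σ).map (MLProof.Amat K t) := by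
      rw [List.map_ofFn]
      rfl
    rw [Matrix.smul_apply, MvPolynomial.coeff_smul, hmap,
      MLProof.entry_eq t ht 0 (Fin.last n)]
    by_cases hσS : InSPerm T t σ
    · obtain ⟨h1, h2, h3⟩ := MLProof.claimA hmono hdisj hnotin hσS
      rw [if_pos ⟨h1, h2⟩, h3, MvPolynomial.coeff_monomial, if_pos rfl, if_pos hσS,
        smul_eq_mul, mul_one]
    · rw [if_neg hσS]
      by_cases hc : MLProof.okRun t 0 (List.ofFn ⇑σ) ∧
          MLProof.rowAfter t 0 (List.ofFn ⇑σ) = Fin.last n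
      · rw [if_pos hc, MvPolynomial.coeff_monomial,
          if_neg (fun he => hσS (MLProof.claimB hmono hdisj hnotin hc.1 he)), smul_zero]
      · rw [if_neg hc, MvPolynomial.coeff_zero, smul_zero]
  have hEne : E 0 (Fin.last n) ≠ 0 := by
    intro h0
    apply hβ
    rw [← hkey, h0, MvPolynomial.coeff_zero]
  apply hEne
  apply MvPolynomial.funext (q := 0)
  intro c
  rw [map_zero]
  -- evaluated matrices are upper triangular
  have hUT : ∀ l, IsUT ((MLProof.Amat K t l).map ⇑(MvPolynomial.eval c)) := by
    intro l i j hij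
    rw [Matrix.map_apply]
    have hz : MLProof.Amat K t l i j = 0 := by
      unfold MLProof.Amat
      split
      · simp only [Matrix.single, Matrix.of_apply, ite_eq_right_iff, and_imp]
        intro h1 h2
        exfalso
        rw [← h1, ← h2] at hij
        simp only [Fin.coe_castSucc, Fin.val_succ] at hij
        omega
      · exact Matrix.diagonal_apply_ne _ (fun hfalse => by rw [hfalse] at hij; omega)
    rw [hz, map_zero]
  have h0 := hall (fun l => (MLProof.Amat K t l).map ⇑(MvPolynomial.eval c)) hUT
  have hcomm : mEval α (fun l => (MLProof.Amat K t l).map ⇑(MvPolynomial.eval c)) =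
      (mEval α (MLProof.Amat K t)).map ⇑(MvPolynomial.eval c) := by
    unfold mEval
    ext i j
    rw [Matrix.map_apply, Matrix.sum_apply, Matrix.sum_apply, map_sum]
    apply Finset.sum_congr rfl
    intro σ _
    rw [Matrix.smul_apply, Matrix.smul_apply, MvPolynomial.smul_eq_C_mul, map_mul,
      MvPolynomial.eval_C, ← smul_eq_mul]
    congr 1
    have hmap2 : (List.ofFn fun p => (MLProof.Amat K t (σ p)).map ⇑(MvPolynomial.eval c)) =
        List.map (⇑(MvPolynomial.eval c).mapMatrix)
          (List.ofFn fun p => MLProof.Amat K t (σ p)) := by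
      rw [List.map_ofFn]
      rfl
    rw [hmap2, ← map_list_prod ((MvPolynomial.eval c).mapMatrix), RingHom.mapMatrix_apply, Matrix.map_apply]
  rw [hcomm] at h0
  have h1 : ((mEval α (MLProof.Amat K t)).map ⇑(MvPolynomial.eval c)) 0 (Fin.last n) = 0 := by
    rw [h0]
    rfl
  rw [Matrix.map_apply] at h1
  exact h1
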